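/- arXiv:1809.03176 — 2 statements merged into one kernel-verified Lean document; each statement's English description precedes it below -/
import Mathlib

section
/- Let X be a measurable space with a finite measure λ, and let π : X → (0,∞) be measurable with C_1 := sup_{x,y∈X} (1 + π(y)/π(x)) < ∞. For i = 1, 2 let p_i : X × X → [0,∞) be measurable transition functions, and define t_i(x,y) = min{ p_i(x,y), (π(y)/π(x)) p_i(y,x) } and the kernels K_i(x, A) = ∫_A t_i(x,y) λ(dy) + (1 − ∫_X t_i(x,z) λ(dz)) 1_{x∈A}, assuming ∫_X t_i(x,z) λ(dz) ≤ 1 for all x. Then for all x, y ∈ X, |t_1(x,y) − t_2(x,y)| ≤ |p_1(x,y) − p_2(x,y)| + (π(y)/π(x)) |p_1(y,x) − p_2(y,x)|, and consequently, if sup_{u,v∈X} |p_1(u,v) − p_2(u,v)| ≤ ε, then sup_{x∈X} ‖K_1(x,·) − K_2(x,·)‖_TV ≤ C_1 ε λ(X). -/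
open MeasureTheory
open scoped ENNReal

/-- Total variation distance between two measures: the supremum over measurable sets of
the absolute difference of the measures. -/
noncomputable def tvDist {X : Type*} [MeasurableSpace X] (μ ν : Measure X) : ℝ :=
  ⨆ A : {A : Set X // MeasurableSet A}, |(μ A).toReal - (ν A).toReal|

lemma abs_min_min_aux {a b c d : ℝ} : |min a b - min c d| ≤ |a - c| + |b - d| :=
  (abs_min_sub_min_le_max a b c d).trans (max_le (le_add_of_nonneg_right (abs_nonneg _))
    (le_add_of_nonneg_left (abs_nonneg _)))

/-- with `t_i(x,y) = min{p_i(x,y), (π(y)/π(x)) p_i(y,x)}` and the kernels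
`K_i(x,A) = ∫_A t_i(x,y) λ(dy) + (1 − ∫_X t_i(x,z) λ(dz)) 1_{x∈A}`, one has the pointwise
bound `|t₁ − t₂| ≤ |p₁ − p₂| + (π(y)/π(x))|p₁(y,x) − p₂(y,x)|`; consequently, if
`sup |p₁ − p₂| ≤ ε` then `sup_x ‖K₁(x,·) − K₂(x,·)‖_TV ≤ C₁ ε λ(X)`. -/
theorem two_stage_transition_tv_bound
    {X : Type*} [MeasurableSpace X] (lam : Measure X) [IsFiniteMeasure lam]
    (piD : X → ℝ) (hpiMeas : Measurable piD) (hpiPos : ∀ x, 0 < piD x)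
    (C₁ : ℝ) (hC₁ : ∀ x y, 1 + piD y / piD x ≤ C₁)
    (p₁ p₂ : X → X → ℝ)
    (hp₁Meas : Measurable (Function.uncurry p₁)) (hp₂Meas : Measurable (Function.uncurry p₂))
    (hp₁Nonneg : ∀ x y, 0 ≤ p₁ x y) (hp₂Nonneg : ∀ x y, 0 ≤ p₂ x y)
    (t₁ t₂ : X → X → ℝ)
    (ht₁ : ∀ x y, t₁ x y = min (p₁ x y) (piD y / piD x * p₁ y x))
    (ht₂ : ∀ x y, t₂ x y = min (p₂ x y) (piD y / piD x * p₂ y x))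
    (hs₁ : ∀ x, ∫⁻ z, ENNReal.ofReal (t₁ x z) ∂lam ≤ 1)
    (hs₂ : ∀ x, ∫⁻ z, ENNReal.ofReal (t₂ x z) ∂lam ≤ 1)
    (K₁ K₂ : X → Measure X)
    (hK₁ : ∀ x, K₁ x = lam.withDensity (fun y => ENNReal.ofReal (t₁ x y))
        + (1 - ∫⁻ z, ENNReal.ofReal (t₁ x z) ∂lam) • Measure.dirac x)
    (hK₂ : ∀ x, K₂ x = lam.withDensity (fun y => ENNReal.ofReal (t₂ x y))
        + (1 - ∫⁻ z, ENNReal.ofReal (t₂ x z) ∂lam) • Measure.dirac x) :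
    (∀ x y, |t₁ x y - t₂ x y| ≤
      |p₁ x y - p₂ x y| + piD y / piD x * |p₁ y x - p₂ y x|) ∧
    ∀ ε : ℝ, 0 ≤ ε → (∀ u v, |p₁ u v - p₂ u v| ≤ ε) →
      ∀ x, tvDist (K₁ x) (K₂ x) ≤ C₁ * ε * (lam Set.univ).toReal := by
  classical
  have hratio : ∀ x y : X, 0 ≤ piD y / piD x := fun x y =>
    div_nonneg (hpiPos y).le (hpiPos x).le
  have hpt : ∀ x y, |t₁ x y - t₂ x y| ≤
      |p₁ x y - p₂ x y| + piD y / piD x * |p₁ y x - p₂ y x| := by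
    intro x y
    rw [ht₁, ht₂]
    refine abs_min_min_aux.trans ?_
    rw [← mul_sub, abs_mul, abs_of_nonneg (hratio x y)]
  refine ⟨hpt, ?_⟩
  intro ε hε hp x
  -- measurability and integrability of t₁ x, t₂ x
  have hmeas : ∀ (p : X → X → ℝ), Measurable (Function.uncurry p) →
      Measurable (fun y => min (p x y) (piD y / piD x * p y x)) := by
    intro p hpm
    have h1 : Measurable (fun y => p x y) :=
      hpm.comp (measurable_const.prodMk measurable_id)
    have h2 : Measurable (fun y => p y x) :=
      hpm.comp (measurable_id.prodMk measurable_const)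
    exact h1.min ((hpiMeas.div_const _).mul h2)
  have ht₁m : Measurable (t₁ x) := by
    have := hmeas p₁ hp₁Meas
    simpa [funext fun y => ht₁ x y] using this
  have ht₂m : Measurable (t₂ x) := by
    have := hmeas p₂ hp₂Meas
    simpa [funext fun y => ht₂ x y] using this
  have ht₁nn : ∀ y, 0 ≤ t₁ x y := fun y => by
    rw [ht₁]; exact le_min (hp₁Nonneg x y) (mul_nonneg (hratio x y) (hp₁Nonneg y x))
  have ht₂nn : ∀ y, 0 ≤ t₂ x y := fun y => by
    rw [ht₂]; exact le_min (hp₂Nonneg x y) (mul_nonneg (hratio x y) (hp₂Nonneg y x))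
  have hint : ∀ (t : X → ℝ), Measurable t → (∀ y, 0 ≤ t y) →
      (∫⁻ z, ENNReal.ofReal (t z) ∂lam ≤ 1) → Integrable t lam := by
    intro t htm htnn hts
    refine ⟨htm.aestronglyMeasurable, ?_⟩
    show (∫⁻ z, (‖t z‖₊ : ℝ≥0∞) ∂lam) < ⊤
    calc ∫⁻ z, (‖t z‖₊ : ℝ≥0∞) ∂lam = ∫⁻ z, ENNReal.ofReal (t z) ∂lam := by
          refine lintegral_congr fun z => ?_
          rw [show ((‖t z‖₊ : ℝ≥0∞)) = ENNReal.ofReal ‖t z‖ from (ofReal_norm_eq_enorm (t z)).symm,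
            Real.norm_of_nonneg (htnn z)]
      _ ≤ 1 := hts
      _ < ⊤ := ENNReal.one_lt_top
  have hint₁ : Integrable (t₁ x) lam := hint _ ht₁m ht₁nn (hs₁ x)
  have hint₂ : Integrable (t₂ x) lam := hint _ ht₂m ht₂nn (hs₂ x)
  -- pointwise bound |t₁ - t₂| ≤ C₁ ε
  have hCbound : ∀ y, |t₁ x y - t₂ x y| ≤ C₁ * ε := by
    intro y
    calc |t₁ x y - t₂ x y| ≤ |p₁ x y - p₂ x y| + piD y / piD x * |p₁ y x - p₂ y x| := hpt x y
      _ ≤ ε + piD y / piD x * ε := by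
          gcongr
          · exact hp x y
          · exact hratio x y
          · exact hp y x
      _ = (1 + piD y / piD x) * ε := by ring
      _ ≤ C₁ * ε := mul_le_mul_of_nonneg_right (hC₁ x y) hε
  have hCnn : 0 ≤ C₁ * ε :=
    le_trans (abs_nonneg _) (hCbound x)
  -- core set integral bound
  have key : ∀ B : Set X, MeasurableSet B →
      |(∫ y in B, t₁ x y ∂lam) - ∫ y in B, t₂ x y ∂lam| ≤ C₁ * ε * (lam Set.univ).toReal := by
    intro B hB
    rw [← integral_sub (hint₁.restrict) (hint₂.restrict)]
    calc |∫ y in B, (t₁ x y - t₂ x y) ∂lam| ≤ ∫ y in B, |t₁ x y - t₂ x y| ∂lam := by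
          simpa using norm_integral_le_integral_norm (μ := lam.restrict B)
            (f := fun y => t₁ x y - t₂ x y)
      _ ≤ ∫ _ in B, C₁ * ε ∂lam := by
          refine integral_mono ((hint₁.sub hint₂).abs.restrict) (integrable_const _) ?_
          intro y; exact hCbound y
      _ = (lam B).toReal * (C₁ * ε) := by
          simp [integral_const, Measure.restrict_apply_univ, measureReal_def]
      _ ≤ (lam Set.univ).toReal * (C₁ * ε) := by
          gcongr
          · exact (measure_ne_top lam _)
          · exact Set.subset_univ B
      _ = C₁ * ε * (lam Set.univ).toReal := by ring
  -- value of the kernels on measurable sets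
  have hKval : ∀ (t : X → ℝ), Measurable t → (∀ y, 0 ≤ t y) →
      (∫⁻ z, ENNReal.ofReal (t z) ∂lam ≤ 1) → ∀ (A : Set X), MeasurableSet A →
      ((lam.withDensity (fun y => ENNReal.ofReal (t y))
        + (1 - ∫⁻ z, ENNReal.ofReal (t z) ∂lam) • Measure.dirac x) A).toReal
      = (∫ y in A, t y ∂lam) + (1 - ∫ z, t z ∂lam) * (if x ∈ A then 1 else 0) := by
    intro t htm htnn hts A hA
    have hL : (∫⁻ y in A, ENNReal.ofReal (t y) ∂lam) ≤ 1 :=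
      (setLIntegral_le_lintegral A _).trans hts
    have hofReal : ENNReal.ofReal (∫ z, t z ∂lam) = ∫⁻ z, ENNReal.ofReal (t z) ∂lam :=
      ofReal_integral_eq_lintegral_ofReal (hint t htm htnn hts)
        (Filter.Eventually.of_forall htnn)
    have hofRealA : ENNReal.ofReal (∫ y in A, t y ∂lam) = ∫⁻ y in A, ENNReal.ofReal (t y) ∂lam :=
      ofReal_integral_eq_lintegral_ofReal ((hint t htm htnn hts).restrict)
        (Filter.Eventually.of_forall htnn)
    rw [Measure.add_apply, withDensity_apply _ hA, Measure.smul_apply,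
      Measure.dirac_apply' _ hA, smul_eq_mul,
      ENNReal.toReal_add (ne_top_of_le_ne_top ENNReal.one_ne_top hL)
        (ENNReal.mul_ne_top (ne_top_of_le_ne_top ENNReal.one_ne_top tsub_le_self)
          (by by_cases hx : x ∈ A <;> simp [Set.indicator, hx])),
      ENNReal.toReal_mul, ENNReal.toReal_sub_of_le hts ENNReal.one_ne_top,
      ENNReal.toReal_one, ← hofReal, ← hofRealA,
      ENNReal.toReal_ofReal (integral_nonneg htnn),
      ENNReal.toReal_ofReal (integral_nonneg fun y => htnn y)]
    by_cases hx : x ∈ A <;> simp [Set.indicator_apply, hx]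
  have : Nonempty {A : Set X // MeasurableSet A} := ⟨⟨∅, MeasurableSet.empty⟩⟩
  refine ciSup_le ?_
  rintro ⟨A, hA⟩
  rw [hK₁, hK₂, hKval (t₁ x) ht₁m ht₁nn (hs₁ x) A hA, hKval (t₂ x) ht₂m ht₂nn (hs₂ x) A hA]
  by_cases hx : x ∈ A
  · simp only [hx, if_true, mul_one]
    have e₁ : (∫ y in A, t₁ x y ∂lam) + ∫ y in Aᶜ, t₁ x y ∂lam = ∫ y, t₁ x y ∂lam :=
      integral_add_compl hA hint₁
    have e₂ : (∫ y in A, t₂ x y ∂lam) + ∫ y in Aᶜ, t₂ x y ∂lam = ∫ y, t₂ x y ∂lam :=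
      integral_add_compl hA hint₂
    have h := key Aᶜ hA.compl
    rw [abs_sub_comm] at h
    calc |(∫ y in A, t₁ x y ∂lam) + (1 - ∫ z, t₁ x z ∂lam)
          - ((∫ y in A, t₂ x y ∂lam) + (1 - ∫ z, t₂ x z ∂lam))|
        = |(∫ y in Aᶜ, t₂ x y ∂lam) - ∫ y in Aᶜ, t₁ x y ∂lam| := by
          rw [← e₁, ← e₂]; ring_nf
      _ ≤ C₁ * ε * (lam Set.univ).toReal := h
  · simpa [hx] using key A hA
end

section
/- Let X be a measurable space with a σ-finite measure λ, fix x ∈ X with λ({x}) = 0, let k : X × X → [0,∞) be measurable with ∫_X k(z, y) λ(dy) ≤ 1 for every z, set ρ(z) = 1 − ∫_X k(z, y) λ(dy), and define the Markov kernel K(z, A) = ∫_A k(z, y) λ(dy) + ρ(z) 1_{z∈A}. Then for every n ≥ 1 there exists a measurable function k_n(x, ·) : X → [0,∞) such that the n-step kernel satisfies K^n(x, A) = ∫_A k_n(x, y) λ(dy) + ρ(x)^n 1_{x∈A} for all measurable A ⊆ X. -/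
open MeasureTheory
open scoped ENNReal

/-- The `(n+1)`-step kernel of a transition kernel `K : X → Measure X`:
`iterStep K 0 = K` and `iterStep K (n+1) x (A) = ∫ (iterStep K n)(x, dz) K(z, A)`,
so `iterStep K n` is the `(n+1)`-step kernel `K^{n+1}`. -/
noncomputable def iterStep {X : Type*} [MeasurableSpace X] (K : X → Measure X) :
    ℕ → X → Measure X
  | 0 => K
  | n + 1 => fun x => (iterStep K n x).bind K

/-- for a kernel `K(z,·) = k(z,·)·λ + ρ(z) δ_z` with
`ρ(z) = 1 − ∫ k(z,y) λ(dy)` and `λ({x}) = 0`, every `n`-step iterate (here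
`iterStep K n = K^{n+1}`, `n ≥ 0`) decomposes as an absolutely continuous part plus the
point mass `ρ(x)^{n+1} δ_x` at the starting state. -/
theorem iterated_kernel_decomposition
    {X : Type*} [MeasurableSpace X] (lam : Measure X) [SigmaFinite lam]
    (x : X) (hx : lam {x} = 0)
    (k : X → X → ℝ≥0∞) (hkMeas : Measurable (Function.uncurry k))
    (hkle : ∀ z, ∫⁻ y, k z y ∂lam ≤ 1)
    (ρ : X → ℝ≥0∞) (hρ : ∀ z, ρ z = 1 - ∫⁻ y, k z y ∂lam)
    (K : X → Measure X)
    (hK : ∀ z, K z = lam.withDensity (k z) + ρ z • Measure.dirac z) :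
    ∀ n : ℕ, ∃ kn : X → ℝ≥0∞, Measurable kn ∧
      iterStep K n x = lam.withDensity kn + (ρ x) ^ (n + 1) • Measure.dirac x := by
  have hρMeas : Measurable ρ := by
    have : ρ = fun z => 1 - ∫⁻ y, k z y ∂lam := funext hρ
    rw [this]
    exact measurable_const.sub (Measurable.lintegral_prod_right' hkMeas)
  have hkz : ∀ z, Measurable (k z) := fun z => hkMeas.of_uncurry_left
  have hsetInt : ∀ A : Set X, MeasurableSet A →
      Measurable fun z => ∫⁻ y in A, k z y ∂lam := by
    intro A hA
    have : (fun z => ∫⁻ y in A, k z y ∂lam)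
        = fun z => ∫⁻ y, (Prod.snd ⁻¹' A).indicator (Function.uncurry k) (z, y) ∂lam := by
      funext z
      rw [← lintegral_indicator hA _]
      congr 1
    rw [this]
    exact Measurable.lintegral_prod_right' (hkMeas.indicator (measurable_snd hA))
  have hKA : ∀ A : Set X, MeasurableSet A →
      ∀ z, K z A = (∫⁻ y in A, k z y ∂lam) + ρ z * A.indicator 1 z := by
    intro A hA z
    rw [hK z]
    simp [withDensity_apply _ hA, Measure.dirac_apply' _ hA]
  have hKmeas : Measurable K := by
    apply Measure.measurable_of_measurable_coe
    intro A hA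
    have : (fun z => K z A)
        = fun z => (∫⁻ y in A, k z y ∂lam) + ρ z * A.indicator 1 z :=
      funext (hKA A hA)
    rw [this]
    exact (hsetInt A hA).add (hρMeas.mul (measurable_one.indicator hA))
  have hKcoe : ∀ A : Set X, MeasurableSet A → Measurable fun z => K z A :=
    fun A hA => (Measure.measurable_coe hA).comp hKmeas
  intro n
  induction n with
  | zero =>
    exact ⟨k x, hkz x, by simpa [iterStep] using hK x⟩
  | succ n ih =>
    obtain ⟨kn, hknMeas, hkn⟩ := ih
    set g : X → ℝ≥0∞ :=
      fun y => ((∫⁻ z, kn z * k z y ∂lam) + kn y * ρ y) + ρ x ^ (n + 1) * k x y with hg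
    have hgMeas : Measurable g := by
      apply Measurable.add
      · exact (Measurable.lintegral_prod_left'
          ((hknMeas.comp measurable_fst).mul hkMeas)).add (hknMeas.mul hρMeas)
      · exact measurable_const.mul (hkz x)
    refine ⟨g, hgMeas, ?_⟩
    have hstep : iterStep K (n + 1) x = (iterStep K n x).bind K := rfl
    rw [hstep, hkn]
    ext A hA
    rw [Measure.bind_apply hA hKmeas.aemeasurable]
    rw [lintegral_add_measure, lintegral_smul_measure,
      lintegral_dirac' _ (hKcoe A hA)]
    rw [lintegral_withDensity_eq_lintegral_mul _ hknMeas (hKcoe A hA)]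
    have h1 : ∫⁻ z, (kn * fun z => K z A) z ∂lam
        = (∫⁻ y in A, (∫⁻ z, kn z * k z y ∂lam) ∂lam) + ∫⁻ z in A, kn z * ρ z ∂lam := by
      have heq : (kn * fun z => K z A)
          = fun z => (∫⁻ y in A, kn z * k z y ∂lam) + A.indicator (fun z => kn z * ρ z) z := by
        funext z
        simp only [Pi.mul_apply, hKA A hA z, mul_add, lintegral_const_mul _ (hkz z)]
        congr 1
        by_cases hz : z ∈ A <;> simp [Set.indicator, hz]
      rw [heq]
      beta_reduce
      rw [lintegral_add_right (g := A.indicator (fun z => kn z * ρ z)) _ ((hknMeas.mul hρMeas).indicator hA)]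
      congr 1
      · -- Tonelli swap
        have h2 : (fun z => ∫⁻ y in A, kn z * k z y ∂lam)
            = fun z => ∫⁻ y, A.indicator (fun y => kn z * k z y) y ∂lam := by
          funext z; rw [lintegral_indicator hA _]
        rw [h2, lintegral_lintegral_swap]
        · rw [← lintegral_indicator hA _]
          congr 1
          funext y
          by_cases hy : y ∈ A
          · simp only [Set.indicator_of_mem hy]
          · simp [Set.indicator_of_notMem hy]
        · have : Measurable fun p : X × X =>
              A.indicator (fun y => kn p.1 * k p.1 y) p.2 := by
            have : (fun p : X × X => A.indicator (fun y => kn p.1 * k p.1 y) p.2)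
                = (Prod.snd ⁻¹' A).indicator
                    (fun p : X × X => kn p.1 * Function.uncurry k p) := by
              funext p
              by_cases hp : p.2 ∈ A <;> simp [Set.indicator, hp, Function.uncurry]
            rw [this]
            exact ((hknMeas.comp measurable_fst).mul hkMeas).indicator (measurable_snd hA)
          exact this.aemeasurable
      · exact lintegral_indicator hA _
    rw [h1, hKA A hA x]
    rw [Measure.add_apply, withDensity_apply _ hA, Measure.smul_apply, smul_eq_mul,
      Measure.dirac_apply' _ hA]
    simp only [hg]
    rw [lintegral_add_right (g := fun y => ρ x ^ (n + 1) * k x y) _ (measurable_const.mul (hkz x)),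
      lintegral_add_right (g := fun y => kn y * ρ y) _ (hknMeas.mul hρMeas),
      lintegral_const_mul _ (hkz x)]
    ring
end
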